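/- For every m ≥ 1, the total number of Z2-stable equivalence relations on Fin m × ZMod 2 equals the sum, over all equivalence relations π on Fin m, of the product over the equivalence classes B of π of (2^(|B| - 1) + 1). (Taking m = 2k, this is the dimension of the algebra of Z2-relations A_k^{Z2}(x), and the sum can be rewritten as Σ_{λ ⊢ 2k} n_λ Π_i (2^(λ_i - 1) + 1), where n_λ is the number of set partitions of [2k] with block sizes λ_1, …, λ_t.) -/

import Mathlib

/-- An equivalence relation on `T × ZMod 2` is `ZMod 2`-stable if it is preserved by
the action `g·(t,x) = (t, g+x)`. -/
def IsStable {T : Type*} (d : Setoid (T × ZMod 2)) : Prop :=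
  ∀ g : ZMod 2, ∀ p q : T × ZMod 2, d.r p q → d.r (p.1, g + p.2) (q.1, g + q.2)

namespace Stmt7

lemma zmod2_cases (a b : ZMod 2) : a = b ∨ a = 1 + b := by revert a b; decide

variable {T S : Type*}

/-- the shadow relation on `T` -/
def shRel (d : Setoid (T × ZMod 2)) (t t' : T) : Prop := ∃ x y : ZMod 2, d.r (t, x) (t', y)

lemma shRel_equiv {d : Setoid (T × ZMod 2)} (hd : IsStable d) : Equivalence (shRel d) := by
  constructor
  · exact fun t => ⟨0, 0, d.refl' _⟩
  · rintro t t' ⟨x, y, h⟩; exact ⟨y, x, d.symm' h⟩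
  · rintro t t' t'' ⟨x, y, h1⟩ ⟨y', z, h2⟩
    rcases zmod2_cases y' y with h | h
    · exact ⟨x, z, d.trans' h1 (h ▸ h2)⟩
    · refine ⟨x, 1 + z, d.trans' h1 ?_⟩
      have := hd 1 _ _ h2
      simpa [h, ← add_assoc, show (1:ZMod 2)+1 = 0 from rfl] using this

/-- connectedness of the shadow -/
def Conn (d : Setoid (S × ZMod 2)) : Prop := ∀ t t' : S, shRel d t t'

/-- the full setoid -/
def fullS (α : Type*) : Setoid α := ⟨fun _ _ => True, ⟨fun _ => trivial, fun _ => trivial, fun _ _ => trivial⟩⟩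

lemma fullS_stable : IsStable (fullS (S × ZMod 2)) := fun _ _ _ _ => trivial

lemma fullS_conn : Conn (fullS (S × ZMod 2)) := fun _ _ => ⟨0, 0, trivial⟩

/-- the setoid attached to a `ZMod 2`-valued function -/
def kerS (f : S → ZMod 2) : Setoid (S × ZMod 2) :=
  ⟨fun p q => p.2 - f p.1 = q.2 - f q.1,
   ⟨fun _ => rfl, fun h => h.symm, fun h1 h2 => h1.trans h2⟩⟩

lemma kerS_rel (f : S → ZMod 2) (p q : S × ZMod 2) :
    (kerS f).r p q ↔ p.2 - f p.1 = q.2 - f q.1 := Iff.rfl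

lemma kerS_stable (f : S → ZMod 2) : IsStable (kerS f) := by
  intro g p q h
  simp only [kerS_rel] at h ⊢
  rw [add_sub_assoc, add_sub_assoc, h]

lemma kerS_conn (f : S → ZMod 2) : Conn (kerS f) := by
  intro t t'
  exact ⟨f t, f t', by simp [kerS_rel]⟩

section Count

variable [Finite S] [Nonempty S]

lemma key_full {d : Setoid (S × ZMod 2)} (hd : IsStable d) (hc : Conn d) (s0 : S)
    (h01 : d.r (s0, 0) (s0, 1)) : ∀ p q, d.r p q := by
  -- every point is related to (s0, 0)
  have key : ∀ p : S × ZMod 2, d.r (s0, 0) p := by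
    rintro ⟨t, x⟩
    obtain ⟨a, b, hab⟩ := hc s0 t
    have h1 := hd (x - b) _ _ hab
    simp only at h1
    have h2 : d.r (s0, x - b + a) (t, x) := by simpa using h1
    rcases zmod2_cases (x - b + a) 0 with h | h
    · rwa [h] at h2
    · have h3 := hd (x - b + a) _ _ h01
      simp only at h3
      have e1 : x - b + a + 0 = x - b + a := by ring
      have e2 : x - b + a + 1 = 0 := by rw [h]; decide
      rw [e1, e2] at h3
      exact d.trans' (d.symm' h3) h2
  intro p q
  exact d.trans' (d.symm' (key p)) (key q)

lemma count_conn : Nat.card {d : Setoid (S × ZMod 2) // IsStable d ∧ Conn d}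
    = 2 ^ (Nat.card S - 1) + 1 := by
  classical
  obtain ⟨s0⟩ : Nonempty S := inferInstance
  set F : Option {f : S → ZMod 2 // f s0 = 0} →
      {d : Setoid (S × ZMod 2) // IsStable d ∧ Conn d} :=
    fun o => o.elim ⟨fullS _, fullS_stable, fullS_conn⟩
      (fun f => ⟨kerS f.1, kerS_stable _, kerS_conn _⟩) with hF
  have hbij : Function.Bijective F := by
    constructor
    · rintro (_ | ⟨f, hf⟩) (_ | ⟨g, hg⟩) h
      · rfl
      · exfalso
        have := congrArg (fun d => d.1.r (s0, 0) (s0, 1)) h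
        change (fullS (S × ZMod 2)).r (s0, 0) (s0, 1) = (kerS g).r (s0, 0) (s0, 1) at this
        rw [kerS_rel] at this
        have h2 : (0 : ZMod 2) - g s0 = 1 - g s0 := this.mp trivial
        rw [hg, sub_zero, sub_zero] at h2
        exact zero_ne_one h2
      · exfalso
        have := congrArg (fun d => d.1.r (s0, 0) (s0, 1)) h
        change (kerS f).r (s0, 0) (s0, 1) = (fullS (S × ZMod 2)).r (s0, 0) (s0, 1) at this
        rw [kerS_rel] at this
        have h2 : (0 : ZMod 2) - f s0 = 1 - f s0 := this.mpr trivial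
        rw [hf, sub_zero, sub_zero] at h2
        exact zero_ne_one h2
      · have := congrArg (fun d => d.1.r) h
        change (kerS f).r = (kerS g).r at this
        congr 1
        ext t
        have h2 : (kerS f).r (s0, 0) (t, f t) ↔ (kerS g).r (s0, 0) (t, f t) := by rw [this]
        rw [kerS_rel, kerS_rel] at h2
        simp only [hf, hg] at h2
        have h3 : (0 : ZMod 2) - 0 = f t - g t := h2.mp (by simp)
        have h4 : f t - g t = 0 := by rw [← h3]; simp
        exact sub_eq_zero.mp h4
    · rintro ⟨d, hd, hc⟩
      by_cases h01 : d.r (s0, 0) (s0, 1)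
      · refine ⟨none, ?_⟩
        simp only [hF, Option.elim]
        congr 1
        apply Setoid.ext
        intro p q
        constructor
        · intro _; exact key_full hd hc s0 h01 p q
        · intro _; trivial
      · -- construct f
        have hex : ∀ t : S, ∃ y, d.r (s0, 0) (t, y) := by
          intro t
          obtain ⟨a, b, hab⟩ := hc s0 t
          have h1 := hd (0 - a) _ _ hab
          simp only at h1
          refine ⟨0 - a + b, ?_⟩
          have e : (0 : ZMod 2) - a + a = 0 := by rw [zero_sub]; exact neg_add_cancel a
          rwa [e] at h1
        choose f hfr using hex
        have hbase : ∀ p : S × ZMod 2, d.r (s0, p.2 - f p.1) p := by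
          rintro ⟨t, x⟩
          have h1 := hd (x - f t) _ _ (hfr t)
          simp only at h1
          have e1 : x - f t + 0 = x - f t := by ring
          have e2 : x - f t + f t = x := by ring
          rw [e1, e2] at h1
          exact h1
        have hne : ∀ c c' : ZMod 2, d.r (s0, c) (s0, c') → c = c' := by
          intro c c' hcc
          by_contra hne
          rcases zmod2_cases c' c with h | h
          · exact hne h.symm
          · apply h01
            have h3 := hd c _ _ hcc
            simp only at h3
            have e1 : c + c = 0 := CharTwo.add_self_eq_zero c
            have e2 : c + c' = 1 := by rw [h, add_comm 1 c, ← add_assoc, e1, zero_add]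
            rwa [e1, e2] at h3
        have hf0 : f s0 = 0 := by
          have := hfr s0
          have h2 := hne 0 (f s0) this
          exact h2.symm
        refine ⟨some ⟨f, hf0⟩, ?_⟩
        simp only [hF, Option.elim]
        congr 1
        apply Setoid.ext
        intro p q
        rw [kerS_rel]
        constructor
        · intro hpq
          exact d.trans' (d.symm' (hbase p)) (hpq ▸ hbase q)
        · intro hpq
          exact hne _ _ (d.trans' (hbase p) (d.trans' hpq (d.symm' (hbase q))))
  -- now count
  have hcard := Nat.card_eq_of_bijective F hbij
  rw [← hcard]
  have : Nat.card (Option {f : S → ZMod 2 // f s0 = 0})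
      = Nat.card {f : S → ZMod 2 // f s0 = 0} + 1 := by
    have := Fintype.ofFinite {f : S → ZMod 2 // f s0 = 0}
    rw [Nat.card_eq_fintype_card, Nat.card_eq_fintype_card, Fintype.card_option]
  rw [this]
  congr 1
  have e : {f : S → ZMod 2 // f s0 = 0} ≃ ({s : S // s ≠ s0} → ZMod 2) := by
    refine ⟨fun f s => f.1 s.1, fun g => ⟨fun s => if h : s = s0 then 0 else g ⟨s, h⟩, by simp⟩, ?_, ?_⟩
    · rintro ⟨f, hf⟩
      ext s
      by_cases h : s = s0
      · simp [h, hf]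
      · simp [h]
    · intro g
      ext s
      simp [s.2]
  rw [Nat.card_congr e, Nat.card_fun, Nat.card_zmod]
  congr 1
  have : Nat.card {s : S // s ≠ s0} = Nat.card S - 1 := by
    have := Fintype.ofFinite S
    rw [Nat.card_eq_fintype_card, Nat.card_eq_fintype_card, Fintype.card_subtype_compl,
      Fintype.card_subtype_eq]
  rw [this]

end Count

section Glue

variable {T : Type*}

lemma rel_of_mem_class {π : Setoid T} {B : Set T} (hB : B ∈ π.classes) {t t' : T}
    (ht : t ∈ B) (ht' : t' ∈ B) : π.r t t' := by
  obtain ⟨y, rfl⟩ := hB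
  exact π.trans' ht (π.symm' ht')

/-- the shadow setoid -/
def sh (d : {d : Setoid (T × ZMod 2) // IsStable d}) : Setoid T :=
  ⟨shRel d.1, shRel_equiv d.2⟩

/-- restriction of a setoid on `T × ZMod 2` to `B × ZMod 2` -/
def resS (d : Setoid (T × ZMod 2)) (B : Set T) : Setoid (B × ZMod 2) :=
  ⟨fun p q => d.r (p.1.1, p.2) (q.1.1, q.2),
   ⟨fun _ => d.refl' _, fun h => d.symm' h, fun h1 h2 => d.trans' h1 h2⟩⟩

lemma resS_stable {d : Setoid (T × ZMod 2)} (hd : IsStable d) (B : Set T) :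
    IsStable (resS d B) := fun g p q h => hd g (p.1.1, p.2) (q.1.1, q.2) h

lemma resS_conn {d : {d : Setoid (T × ZMod 2) // IsStable d}} {π : Setoid T}
    (hΦ : sh d = π) {B : Set T} (hB : B ∈ π.classes) : Conn (resS d.1 B) := by
  intro t t'
  have h1 : π.r t.1 t'.1 := rel_of_mem_class hB t.2 t'.2
  rw [← hΦ] at h1
  obtain ⟨x, y, hxy⟩ := h1
  exact ⟨x, y, hxy⟩

/-- gluing a family of setoids on the classes of `π` -/
def glueS (π : Setoid T) (e : ∀ B : π.classes, Setoid (B.1 × ZMod 2)) :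
    Setoid (T × ZMod 2) := by
  refine ⟨fun p q => ∃ (B : π.classes) (h1 : p.1 ∈ B.1) (h2 : q.1 ∈ B.1),
    (e B).r (⟨p.1, h1⟩, p.2) (⟨q.1, h2⟩, q.2), ?_, ?_, ?_⟩
  · intro p
    refine ⟨⟨{x | π.r x p.1}, π.mem_classes p.1⟩, π.refl' p.1, π.refl' p.1, (e _).refl' _⟩
  · rintro p q ⟨B, h1, h2, h⟩
    exact ⟨B, h2, h1, (e B).symm' h⟩
  · rintro p q r ⟨B, h1, h2, h⟩ ⟨B', h2', h3, h'⟩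
    have hBB : B = B' := Subtype.ext (Setoid.eq_of_mem_classes B.2 h2 B'.2 h2')
    subst hBB
    exact ⟨B, h1, h3, (e B).trans' h h'⟩

lemma glueS_stable (π : Setoid T) (e : ∀ B : π.classes, Setoid (B.1 × ZMod 2))
    (he : ∀ B, IsStable (e B)) : IsStable (glueS π e) := by
  rintro g p q ⟨B, h1, h2, h⟩
  exact ⟨B, h1, h2, he B g _ _ h⟩

/-- the fiber of the shadow map over `π` is equivalent to the product of the
stable connected setoids on the classes -/
noncomputable def fiberEquiv (π : Setoid T) :
    {d : {d : Setoid (T × ZMod 2) // IsStable d} // sh d = π} ≃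
      (∀ B : π.classes, {e : Setoid (B.1 × ZMod 2) // IsStable e ∧ Conn e}) where
  toFun d B := ⟨resS d.1.1 B.1, resS_stable d.1.2 B.1, resS_conn d.2 B.2⟩
  invFun e := by
    refine ⟨⟨glueS π (fun B => (e B).1), glueS_stable π _ (fun B => (e B).2.1)⟩, ?_⟩
    apply Setoid.ext
    intro t t'
    constructor
    · rintro ⟨x, y, B, h1, h2, -⟩
      exact rel_of_mem_class B.2 h1 h2
    · intro h
      set B : π.classes := ⟨{x | π.r x t'}, π.mem_classes t'⟩ with hB
      obtain ⟨x, y, hxy⟩ := (e B).2.2 ⟨t, h⟩ ⟨t', π.refl' t'⟩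
      exact ⟨x, y, B, h, π.refl' t', hxy⟩
  left_inv := by
    rintro ⟨⟨d, hd⟩, hΦ⟩
    refine Subtype.ext (Subtype.ext ?_)
    apply Setoid.ext
    rintro ⟨t, x⟩ ⟨t', y⟩
    constructor
    · rintro ⟨B, h1, h2, h⟩
      exact h
    · intro h
      have hrel : π.r t t' := by
        rw [← hΦ]
        exact ⟨x, y, h⟩
      exact ⟨⟨{z | π.r z t'}, π.mem_classes t'⟩, hrel, π.refl' t', h⟩
  right_inv := by
    intro e
    funext B
    refine Subtype.ext ?_
    apply Setoid.ext
    rintro ⟨⟨t, ht⟩, x⟩ ⟨⟨t', ht'⟩, y⟩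
    constructor
    · rintro ⟨B', h1, h2, h⟩
      have hBB : B' = B := Subtype.ext (Setoid.eq_of_mem_classes B'.2 h1 B.2 ht)
      subst hBB
      exact h
    · intro h
      exact ⟨B, ht, ht', h⟩

end Glue

instance instFiniteSetoid {α : Type*} [Finite α] : Finite (Setoid α) :=
  Finite.of_injective (fun s : Setoid α => s.r)
    (fun s t h => Setoid.ext fun a b => by rw [show s.r = t.r from h])

end Stmt7

set_option maxHeartbeats 1000000 in
/-- for `m ≥ 1`, the total number of `ZMod 2`-stable equivalence
relations on `Fin m × ZMod 2` (for `m = 2k`, the dimension of the algebra of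
`ZMod 2`-relations `A_k^{Z2}(x)`) equals the sum, over all equivalence relations
`π` on `Fin m`, of the product over the equivalence classes `B` of `π` of
`2^(|B|-1) + 1`. -/
theorem stmt_7 (m : ℕ) (hm : 1 ≤ m) :
    Nat.card {d : Setoid (Fin m × ZMod 2) // IsStable d} =
      ∑ᶠ π : Setoid (Fin m),
        ∏ B ∈ (Set.toFinite π.classes).toFinset, (2 ^ (B.ncard - 1) + 1) := by
  classical
  letI : Fintype (Setoid (Fin m)) := Fintype.ofFinite _
  have hfiber : ∀ π : Setoid (Fin m),
      Nat.card {d : {d : Setoid (Fin m × ZMod 2) // IsStable d} // Stmt7.sh d = π}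
        = ∏ B ∈ (Set.toFinite π.classes).toFinset, (2 ^ (B.ncard - 1) + 1) := by
    intro π
    rw [Nat.card_congr (Stmt7.fiberEquiv π)]
    letI : Fintype π.classes := Fintype.ofFinite _
    rw [Nat.card_pi]
    have h1 : ∀ B : π.classes,
        Nat.card {e : Setoid (B.1 × ZMod 2) // IsStable e ∧ Stmt7.Conn e}
          = 2 ^ (B.1.ncard - 1) + 1 := by
      intro B
      have hne : B.1.Nonempty := by
        obtain ⟨y, hy⟩ := B.2
        exact ⟨y, by rw [hy]; exact π.refl' y⟩
      haveI : Nonempty B.1 := hne.to_subtype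
      rw [Stmt7.count_conn, Nat.card_coe_set_eq]
    calc ∏ B : π.classes, Nat.card {e : Setoid (B.1 × ZMod 2) // IsStable e ∧ Stmt7.Conn e}
        = ∏ B : π.classes, (2 ^ (B.1.ncard - 1) + 1) :=
          Finset.prod_congr rfl (fun B _ => h1 B)
      _ = ∏ B ∈ π.classes.toFinset, (2 ^ (B.ncard - 1) + 1) :=
          Finset.prod_set_coe (f := fun B : Set (Fin m) => 2 ^ (B.ncard - 1) + 1) _
      _ = _ := by rw [Set.Finite.toFinset_eq_toFinset]
  have e1 : {d : Setoid (Fin m × ZMod 2) // IsStable d} ≃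
      Σ π : Setoid (Fin m), {d : {d : Setoid (Fin m × ZMod 2) // IsStable d} // Stmt7.sh d = π} :=
    (Equiv.sigmaFiberEquiv Stmt7.sh).symm
  rw [Nat.card_congr e1, finsum_eq_sum_of_fintype]
  letI : ∀ π : Setoid (Fin m),
      Fintype {d : {d : Setoid (Fin m × ZMod 2) // IsStable d} // Stmt7.sh d = π} :=
    fun π => Fintype.ofFinite _
  rw [Nat.card_eq_fintype_card, Fintype.card_sigma]
  exact Finset.sum_congr rfl fun π _ => by rw [← Nat.card_eq_fintype_card, hfiber π]
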